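/- Let p be an odd prime, e ≥ 1 an integer, and c₁ a positive integer with p^f exactly dividing c₁ (f = v_p(c₁) ≥ 0). Let s_p(e,c₁) be the number of x ∈ {0,1,…,p^e − 1} such that p^e divides x² + c₁² and it is not the case that both p divides x and p divides (x² + c₁²)/p^e. Then: if e ≥ 2f+1 and p ≡ 1 (mod 4), s_p(e,c₁) = 2·p^f if f = 0 (i.e. equals 2) and 2(p−1)p^{f−1} if f ≥ 1; if e ≥ 2f+1 and p ≡ 3 (mod 4), s_p(e,c₁) = 0; if e = 2f (with f ≥ 1) and p ≡ 1 (mod 4), s_p(e,c₁) = (p−2)p^{f−1}; if e = 2f and p ≡ 3 (mod 4), s_p(e,c₁) = p^f; if e < 2f and e is even, s_p(e,c₁) = (p−1)p^{e/2 − 1}; and if e < 2f and e is odd, s_p(e,c₁) = 0. -/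

import Mathlib

open Finset

/-- The local solution count `s_p(e,c₁)`: the number of `x ∈ {0,…,p^e−1}` with
`p^e ∣ x² + c₁²` and not both `p ∣ x` and `p ∣ (x² + c₁²)/p^e`. -/
noncomputable def s (c₁ p e : ℕ) : ℕ :=
  Set.ncard {x : ℕ | x < p ^ e ∧ ((p : ℤ) ^ e ∣ (x : ℤ) ^ 2 + (c₁ : ℤ) ^ 2) ∧
    ¬(((p : ℤ) ∣ (x : ℤ)) ∧ ((p : ℤ) ∣ (((x : ℤ) ^ 2 + (c₁ : ℤ) ^ 2) / (p : ℤ) ^ e)))}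

lemma count_residue (n M : ℕ) (hn : 0 < n) (r : ℤ) :
    ((range (M * n)).filter (fun x : ℕ => (n:ℤ) ∣ (x:ℤ) - r)).card = M := by
  set r₀ : ℕ := (r % n).toNat with hr₀
  have hrn : (r₀ : ℤ) = r % n := Int.toNat_of_nonneg (Int.emod_nonneg r (by exact_mod_cast hn.ne'))
  have hr₀lt : r₀ < n := by
    have := Int.emod_lt_of_pos r (b := n) (by exact_mod_cast hn)
    omega
  have key : ∀ x : ℕ, ((n:ℤ) ∣ (x:ℤ) - r) ↔ x % n = r₀ := by
    intro x
    rw [← Int.modEq_iff_dvd]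
    unfold Int.ModEq
    constructor
    · intro h
      have : ((x % n : ℕ) : ℤ) = (r₀ : ℤ) := by push_cast; rw [hrn]; omega
      exact_mod_cast this
    · intro h
      have : ((x % n : ℕ) : ℤ) = (r₀ : ℤ) := by exact_mod_cast h
      push_cast at this
      omega
  refine (Finset.card_nbij' (fun x => x / n) (fun q => q * n + r₀) ?_ ?_ ?_ ?_).trans (card_range M)
  · intro x hx
    simp only [Finset.mem_coe, mem_filter, mem_range, key] at hx
    exact mem_range.mpr ((Nat.div_lt_iff_lt_mul hn).mpr hx.1)
  · intro q hq
    rw [Finset.mem_coe, mem_range] at hq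
    simp only [Finset.mem_coe, mem_filter, mem_range, key]
    constructor
    · have h1 : q * n + r₀ < (q + 1) * n := by rw [add_mul, one_mul]; omega
      exact lt_of_lt_of_le h1 (Nat.mul_le_mul_right n hq)
    · rw [mul_comm, Nat.mul_add_mod, Nat.mod_eq_of_lt hr₀lt]
  · intro x hx
    simp only [Finset.mem_coe, mem_filter, mem_range, key] at hx
    have := Nat.div_add_mod x n
    show x / n * n + r₀ = x
    rw [Nat.mul_comm]
    omega
  · intro q hq
    show (q * n + r₀) / n = q
    rw [mul_comm, Nat.mul_add_div hn, Nat.div_eq_of_lt hr₀lt, add_zero]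

-- substitution: x = d * y
lemma count_subst (d N : ℕ) (hd : 0 < d) (Q : ℕ → Prop) [DecidablePred Q] :
    ((range (N * d)).filter (fun x : ℕ => d ∣ x ∧ Q (x / d))).card
      = ((range N).filter Q).card := by
  refine Finset.card_nbij' (fun x => x / d) (fun y => d * y) ?_ ?_ ?_ ?_
  · intro x hx
    simp only [Finset.mem_coe, mem_filter, mem_range] at hx ⊢
    have hx1 : x < d * N := by rw [Nat.mul_comm]; exact hx.1
    exact ⟨Nat.div_lt_of_lt_mul hx1, hx.2.2⟩
  · intro y hy
    simp only [Finset.mem_coe, mem_filter, mem_range] at hy ⊢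
    refine ⟨?_, ⟨y, rfl⟩, ?_⟩
    · rw [Nat.mul_comm]; exact mul_lt_mul_of_pos_right hy.1 hd
    · rw [Nat.mul_div_cancel_left y hd]; exact hy.2
  · intro x hx
    simp only [Finset.mem_coe, mem_filter, mem_range] at hx
    exact Nat.mul_div_cancel' hx.2.1
  · intro y hy
    exact Nat.mul_div_cancel_left y hd

-- existence of sqrt(-1) mod p^k for p ≡ 1 mod 4
lemma sqrt_neg_one (p : ℕ) (hp : p.Prime) (h4 : p % 4 = 1) :
    ∀ k : ℕ, ∃ i : ℤ, (p:ℤ)^k ∣ i^2 + 1 := by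
  have hpI : Prime (p:ℤ) := Nat.prime_iff_prime_int.mp hp
  intro k
  induction k with
  | zero => exact ⟨0, by simp⟩
  | succ k ih =>
    obtain ⟨i, hi⟩ := ih
    rcases Nat.eq_zero_or_pos k with rfl | hk
    · -- base: k+1 = 1
      haveI : Fact p.Prime := ⟨hp⟩
      have : IsSquare (-1 : ZMod p) := ZMod.exists_sq_eq_neg_one_iff.mpr (by omega)
      obtain ⟨j, hj⟩ := this
      refine ⟨(j.val : ℤ), ?_⟩
      rw [pow_one]
      rw [← ZMod.intCast_zmod_eq_zero_iff_dvd]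
      push_cast
      rw [ZMod.natCast_val, ZMod.cast_id]
      rw [sq, ← hj]; ring
    · -- lift from p^k to p^(k+1)
      obtain ⟨q, hq⟩ := hi
      have hpi : ¬ (p:ℤ) ∣ i := by
        intro hd
        have h1 : (p:ℤ) ∣ i^2 + 1 := dvd_trans (dvd_pow_self _ hk.ne') ⟨q, hq⟩
        have h2 : (p:ℤ) ∣ i^2 := by rw [sq]; exact hd.mul_right i
        have h3 : (p:ℤ) ∣ 1 := by
          have := dvd_sub h1 h2; simpa using this
        exact hpI.not_dvd_one h3
      have hp2i : ¬ (p:ℤ) ∣ 2 * i := by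
        intro hd
        rcases hpI.dvd_mul.mp hd with h | h
        · have h2 : p ∣ 2 := by exact_mod_cast h
          have := (Nat.prime_dvd_prime_iff_eq hp Nat.prime_two).mp h2
          omega
        · exact hpi h
      have hco : IsCoprime (p:ℤ) (2 * i) := (hpI.coprime_iff_not_dvd).mpr hp2i
      obtain ⟨u, v, huv⟩ := hco
      -- choose t := -q * v ; then q + 2*i*t ≡ q(1 - 2 i v) = q * u * p  mod p
      refine ⟨i + (-q * v) * (p:ℤ)^k, ?_⟩
      have expand : (i + (-q * v) * (p:ℤ)^k)^2 + 1
          = (i^2 + 1) + 2*i*(-q*v)*(p:ℤ)^k + (q*v)^2 * ((p:ℤ)^k)^2 := by ring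
      rw [expand, hq]
      have h1 : (p:ℤ)^(k+1) ∣ (p:ℤ)^k * q + 2*i*(-q*v)*(p:ℤ)^k := by
        have : (p:ℤ)^k * q + 2*i*(-q*v)*(p:ℤ)^k = (p:ℤ)^k * (q * (1 - 2*i*v)) := by ring
        rw [this, pow_succ]
        refine mul_dvd_mul_left _ ?_
        have : q * (1 - 2*i*v) = q * u * p := by
          have : (1:ℤ) - 2*i*v = u * p := by linear_combination -huv
          rw [this]; ring
        rw [this]; exact ⟨q * u, by ring⟩
      have h2 : (p:ℤ)^(k+1) ∣ (q*v)^2 * ((p:ℤ)^k)^2 := by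
        refine dvd_mul_of_dvd_right ?_ _
        rw [← pow_mul]
        exact pow_dvd_pow _ (by omega)
      exact dvd_add h1 h2

-- two-residue characterization
lemma sol_iff (p : ℕ) (hp : p.Prime) (hodd : Odd p) (k : ℕ) (hk : 1 ≤ k)
    (m i : ℤ) (hm : ¬ (p:ℤ) ∣ m) (hi : (p:ℤ)^k ∣ i^2 + 1) (x : ℤ) :
    (p:ℤ)^k ∣ x^2 + m^2 ↔ ((p:ℤ)^k ∣ x - i*m ∨ (p:ℤ)^k ∣ x - (-(i*m))) := by
  have hpI : Prime (p:ℤ) := Nat.prime_iff_prime_int.mp hp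
  have hpi : ¬ (p:ℤ) ∣ i := by
    intro hd
    have h1 : (p:ℤ) ∣ i^2 + 1 := dvd_trans (dvd_pow_self _ (by omega : k ≠ 0)) hi
    have h2 : (p:ℤ) ∣ i^2 := by rw [sq]; exact hd.mul_right i
    exact hpI.not_dvd_one (by have := dvd_sub h1 h2; simpa using this)
  constructor
  · intro h
    have hfac : (p:ℤ)^k ∣ (x - i*m) * (x + i*m) := by
      have : (x - i*m) * (x + i*m) = (x^2 + m^2) - m^2 * (i^2 + 1) := by ring
      rw [this]
      exact dvd_sub h (Dvd.dvd.mul_left hi _)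
    by_cases hc : (p:ℤ) ∣ x - i*m
    · left
      have hnd : ¬ (p:ℤ) ∣ x + i*m := by
        intro hd
        have h2 : (p:ℤ) ∣ 2*(i*m) := by
          have := dvd_sub hd hc; simpa [two_mul] using this
        rcases hpI.dvd_mul.mp h2 with h | h
        · have h2' : p ∣ 2 := by exact_mod_cast h
          have := (Nat.prime_dvd_prime_iff_eq hp Nat.prime_two).mp h2'
          rcases hodd with ⟨t, ht⟩; omega
        · rcases hpI.dvd_mul.mp h with h' | h'
          · exact hpi h'
          · exact hm h'
      have hco : IsCoprime ((p:ℤ)^k) (x + i*m) :=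
        IsCoprime.pow_left ((hpI.coprime_iff_not_dvd).mpr hnd)
      have hfac' : (p:ℤ)^k ∣ (x - i*m) * (x + i*m) := hfac
      exact hco.dvd_of_dvd_mul_right hfac'
    · right
      have hco : IsCoprime ((p:ℤ)^k) (x - i*m) :=
        IsCoprime.pow_left ((hpI.coprime_iff_not_dvd).mpr hc)
      have hfac' : (p:ℤ)^k ∣ (x + i*m) * (x - i*m) := by
        rw [mul_comm]; exact hfac
      have := hco.dvd_of_dvd_mul_right hfac'
      simpa [sub_neg_eq_add] using this
  · rintro (h | h)
    · obtain ⟨t, ht⟩ := h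
      have : x^2 + m^2 = (x - i*m)*(x + i*m) + m^2*(i^2+1) := by ring
      rw [this, ht]
      exact dvd_add (Dvd.dvd.mul_right ⟨t, ht ▸ rfl⟩ _) (Dvd.dvd.mul_left hi _)
    · have h' : (p:ℤ)^k ∣ x + i*m := by simpa [sub_neg_eq_add] using h
      have : x^2 + m^2 = (x + i*m)*(x - i*m) + m^2*(i^2+1) := by ring
      rw [this]
      exact dvd_add (h'.mul_right _) (Dvd.dvd.mul_left hi _)

-- p ≡ 3 mod 4: no solutions even mod p
lemma no_sol (p : ℕ) (hp : p.Prime) (h4 : p % 4 = 3) (m x : ℤ) (hm : ¬ (p:ℤ) ∣ m)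
    (h : (p:ℤ) ∣ x^2 + m^2) : False := by
  haveI : Fact p.Prime := ⟨hp⟩
  have hm0 : (m : ZMod p) ≠ 0 := by
    rwa [Ne, ZMod.intCast_zmod_eq_zero_iff_dvd]
  have hx : ((x^2 + m^2 : ℤ) : ZMod p) = 0 := (ZMod.intCast_zmod_eq_zero_iff_dvd _ _).mpr h
  push_cast at hx
  have hsq : IsSquare (-1 : ZMod p) := by
    refine ⟨(x : ZMod p) * (m : ZMod p)⁻¹, ?_⟩
    field_simp
    linear_combination -hx
  exact (ZMod.exists_sq_eq_neg_one_iff.mp hsq) h4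

-- counting solutions of x² + m² ≡ 0 mod p^k in range p^K
lemma count_two (p : ℕ) (hp : p.Prime) (hodd : Odd p) (h4 : p % 4 = 1)
    (k K : ℕ) (hk : 1 ≤ k) (hK : k ≤ K) (m : ℤ) (hm : ¬ (p:ℤ) ∣ m) :
    ((range (p^K)).filter (fun x : ℕ => (p:ℤ)^k ∣ (x:ℤ)^2 + m^2)).card = 2 * p^(K-k) := by
  classical
  obtain ⟨i, hi⟩ := sqrt_neg_one p hp h4 k
  have hpI : Prime (p:ℤ) := Nat.prime_iff_prime_int.mp hp
  have hpi : ¬ (p:ℤ) ∣ i := by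
    intro hd
    have h1 : (p:ℤ) ∣ i^2 + 1 := dvd_trans (dvd_pow_self _ (by omega : k ≠ 0)) hi
    have h2 : (p:ℤ) ∣ i^2 := by rw [sq]; exact hd.mul_right i
    exact hpI.not_dvd_one (by have := dvd_sub h1 h2; simpa using this)
  have hrange : p^K = p^(K-k) * p^k := by rw [← pow_add]; congr 1; omega
  have hfilter : (range (p^K)).filter (fun x : ℕ => (p:ℤ)^k ∣ (x:ℤ)^2 + m^2)
      = ((range (p^K)).filter (fun x : ℕ => ((p:ℤ)^k : ℤ) ∣ (x:ℤ) - i*m))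
        ∪ ((range (p^K)).filter (fun x : ℕ => ((p:ℤ)^k : ℤ) ∣ (x:ℤ) - (-(i*m)))) := by
    rw [← Finset.filter_or]
    exact Finset.filter_congr fun x _ => by
      simpa using sol_iff p hp hodd k hk m i hm hi (x:ℤ)
  have hdisj : Disjoint ((range (p^K)).filter (fun x : ℕ => ((p:ℤ)^k : ℤ) ∣ (x:ℤ) - i*m))
      ((range (p^K)).filter (fun x : ℕ => ((p:ℤ)^k : ℤ) ∣ (x:ℤ) - (-(i*m)))) := by
    rw [Finset.disjoint_left]
    intro x hx1 hx2
    rw [Finset.mem_filter] at hx1 hx2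
    have hd : (p:ℤ)^k ∣ ((x:ℤ) - (-(i*m))) - ((x:ℤ) - i*m) := dvd_sub hx2.2 hx1.2
    have hd2 : (p:ℤ) ∣ 2*(i*m) := by
      refine dvd_trans (dvd_pow_self _ (by omega : k ≠ 0)) ?_
      have : ((x:ℤ) - (-(i*m))) - ((x:ℤ) - i*m) = 2*(i*m) := by ring
      rwa [this] at hd
    rcases hpI.dvd_mul.mp hd2 with h | h
    · have h2' : p ∣ 2 := by exact_mod_cast h
      have := (Nat.prime_dvd_prime_iff_eq hp Nat.prime_two).mp h2'
      rcases hodd with ⟨t, ht⟩; omega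
    · rcases hpI.dvd_mul.mp h with h' | h'
      · exact hpi h'
      · exact hm h'
  rw [hfilter, Finset.card_union_of_disjoint hdisj]
  have hcast : ∀ (r : ℤ), (range (p^K)).filter (fun x : ℕ => ((p:ℤ))^k ∣ (x:ℤ) - r)
      = (range (p^(K-k) * p^k)).filter (fun x : ℕ => ((p^k : ℕ):ℤ) ∣ (x:ℤ) - r) := by
    intro r
    rw [← hrange]
    exact Finset.filter_congr fun x _ => by push_cast; rfl
  rw [hcast, hcast, count_residue _ _ (pow_pos hp.pos k) _, count_residue _ _ (pow_pos hp.pos k) _]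
  ring

lemma pow_half_dvd {p : ℕ} (hp : p.Prime) (k x : ℕ) (h : p^k ∣ x^2) : p^((k+1)/2) ∣ x := by
  rcases eq_or_ne x 0 with rfl | hx
  · simp
  have hx2 : x^2 ≠ 0 := pow_ne_zero _ hx
  rw [hp.pow_dvd_iff_le_factorization hx2] at h
  simp only [Nat.factorization_pow, Finsupp.smul_apply, smul_eq_mul] at h
  rw [hp.pow_dvd_iff_le_factorization hx]
  omega

lemma count_dvd (p : ℕ) (hp : 0 < p) (k K : ℕ) (hk : k ≤ K) :
    ((range (p^K)).filter (fun y : ℕ => p^k ∣ y)).card = p^(K-k) := by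
  classical
  have h1 : p^K = p^(K-k) * p^k := by rw [← pow_add]; congr 1; omega
  have h2 : (range (p^K)).filter (fun y : ℕ => p^k ∣ y)
      = (range (p^(K-k) * p^k)).filter (fun y : ℕ => ((p^k : ℕ):ℤ) ∣ (y:ℤ) - 0) := by
    rw [← h1]
    exact Finset.filter_congr fun y _ => by
      rw [sub_zero, Int.natCast_dvd_natCast]
  rw [h2, count_residue _ _ (pow_pos hp k) 0]

open Classical in
lemma s_eq (c₁ p e : ℕ) (hp : 0 < p) :
    s c₁ p e = ((range (p^e)).filter (fun x : ℕ =>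
      (p:ℤ)^e ∣ (x:ℤ)^2 + (c₁:ℤ)^2 ∧
      ¬(((p:ℤ) ∣ (x:ℤ)) ∧ (p:ℤ)^(e+1) ∣ (x:ℤ)^2 + (c₁:ℤ)^2))).card := by
  classical
  unfold s
  rw [← Set.ncard_coe_finset]
  congr 1
  ext x
  simp only [Finset.coe_filter, mem_range, Set.mem_setOf_eq]
  constructor
  · rintro ⟨h1, h2, h3⟩
    refine ⟨h1, h2, fun hc => h3 ⟨hc.1, ?_⟩⟩
    rw [Int.dvd_div_iff_mul_dvd h2, ← pow_succ]
    exact hc.2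
  · rintro ⟨h1, h2, h3⟩
    refine ⟨h1, h2, fun hc => h3 ⟨hc.1, ?_⟩⟩
    have h4 := (Int.dvd_div_iff_mul_dvd h2).mp hc.2
    rwa [← pow_succ] at h4

lemma card_subst (p e g : ℕ) (hp : 0 < p) (hg : g ≤ e) (P Q : ℕ → Prop)
    [DecidablePred P] [DecidablePred Q]
    (hPQ : ∀ x : ℕ, x < p^e → (P x ↔ (p^g ∣ x ∧ Q (x / p^g)))) :
    ((range (p^e)).filter P).card = ((range (p^(e-g))).filter Q).card := by
  have h1 : p^e = p^(e-g) * p^g := by rw [← pow_add]; congr 1; omega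
  have h2 : (range (p^e)).filter P
      = (range (p^(e-g) * p^g)).filter (fun x : ℕ => p^g ∣ x ∧ Q (x / p^g)) := by
    rw [← h1]
    exact Finset.filter_congr fun x hx => hPQ x (mem_range.mp hx)
  rw [h2, count_subst _ _ (pow_pos hp g) Q]

/-- The values of `s_p(e,c₁)` for an odd prime `p`, where `f = v_p(c₁)`. -/
theorem local_count_values (p : ℕ) (hp : p.Prime) (hodd : Odd p)
    (e : ℕ) (he : 1 ≤ e) (c₁ : ℕ) (hc : 0 < c₁)
    (f : ℕ) (hf : c₁.factorization p = f) :
    ((2 * f + 1 ≤ e ∧ p % 4 = 1) →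
      s c₁ p e = if f = 0 then 2 else 2 * (p - 1) * p ^ (f - 1)) ∧
    ((2 * f + 1 ≤ e ∧ p % 4 = 3) → s c₁ p e = 0) ∧
    ((e = 2 * f ∧ 1 ≤ f ∧ p % 4 = 1) → s c₁ p e = (p - 2) * p ^ (f - 1)) ∧
    ((e = 2 * f ∧ p % 4 = 3) → s c₁ p e = p ^ f) ∧
    ((e < 2 * f ∧ Even e) → s c₁ p e = (p - 1) * p ^ (e / 2 - 1)) ∧
    ((e < 2 * f ∧ Odd e) → s c₁ p e = 0) := by
  classical
  have hp0 : 0 < p := hp.pos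
  have hp2 : 2 ≤ p := hp.two_le
  set m : ℕ := c₁ / p ^ (c₁.factorization p) with hmdef
  have hc₁ : c₁ = p ^ f * m := by
    rw [hmdef, hf, ← hf]; exact (Nat.ordProj_mul_ordCompl_eq_self c₁ p).symm
  have hm : ¬ p ∣ m := by
    rw [hmdef]; exact Nat.not_dvd_ordCompl hp hc.ne'
  have hmz : ¬ (p:ℤ) ∣ (m:ℤ) := fun h => hm (Int.natCast_dvd_natCast.mp h)
  have hcsq : c₁^2 = p^(2*f) * m^2 := by rw [hc₁, mul_pow, ← pow_mul]; ring
  have hcsqZ : (c₁:ℤ)^2 = (p:ℤ)^(2*f) * (m:ℤ)^2 := by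
    exact_mod_cast congrArg (Nat.cast : ℕ → ℤ) hcsq
  have hDnat : ∀ k x : ℕ, ((p:ℤ)^k ∣ (x:ℤ)^2+(c₁:ℤ)^2) ↔ p^k ∣ x^2+c₁^2 := by
    intro k x
    constructor
    · intro h; exact_mod_cast h
    · intro h; exact_mod_cast h
  have hdvd_c : ∀ k, k ≤ 2*f → p^k ∣ c₁^2 := fun k hk => by
    rw [hcsq]; exact Dvd.dvd.mul_right (pow_dvd_pow p hk) _
  have hsub : ∀ k x : ℕ, k ≤ 2*f → p^k ∣ x^2+c₁^2 → p^k ∣ x^2 := fun k x hk h => by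
    have := Nat.dvd_sub h (hdvd_c k hk)
    simpa using this
  have hfx_of : ∀ x : ℕ, 2*f ≤ e → (p:ℤ)^e ∣ (x:ℤ)^2+(c₁:ℤ)^2 → p^f ∣ x := by
    intro x h2f hD
    have hDn := (hDnat e x).mp hD
    have h2 : p^(2*f) ∣ x^2 := hsub (2*f) x le_rfl (dvd_trans (pow_dvd_pow p h2f) hDn)
    have h3 := pow_half_dvd hp (2*f) x h2
    rwa [show (2*f+1)/2 = f by omega] at h3
  have hns : ∀ y : ℕ, p ∣ y^2 + m^2 → p % 4 = 3 → False := by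
    intro y hy h43
    refine no_sol p hp h43 (m:ℤ) (y:ℤ) hmz ?_
    exact_mod_cast hy
  have hxfact : ∀ y : ℕ, (p^f*y)^2 + c₁^2 = p^(2*f) * (y^2+m^2) := by
    intro y; rw [hcsq, mul_pow, ← pow_mul]; ring
  have hpq2 : e = 2*f → 1 ≤ f → ∀ x : ℕ, x < p^e →
      ((((p:ℤ)^e ∣ (x:ℤ)^2+(c₁:ℤ)^2) ∧
        ¬(((p:ℤ) ∣ (x:ℤ)) ∧ (p:ℤ)^(e+1) ∣ (x:ℤ)^2+(c₁:ℤ)^2))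
        ↔ (p^f ∣ x ∧ ¬ p ∣ ((x / p^f)^2 + m^2))) := by
    intro he2f hf1 x hxlt
    constructor
    · rintro ⟨hD, hnot⟩
      have hfx : p^f ∣ x := hfx_of x (by omega) hD
      obtain ⟨y, hy⟩ := hfx
      have hyq : x / p^f = y := by rw [hy, Nat.mul_div_cancel_left y (pow_pos hp0 f)]
      rw [hyq]
      refine ⟨⟨y, hy⟩, fun hpy => hnot ⟨?_, ?_⟩⟩
      · exact_mod_cast dvd_trans (dvd_pow_self p (by omega : f ≠ 0)) ⟨y, hy⟩
      · rw [hDnat, hy, hxfact y, he2f, pow_succ]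
        exact Nat.mul_dvd_mul dvd_rfl hpy
    · rintro ⟨⟨y, hy⟩, hpy⟩
      have hyq : x / p^f = y := by rw [hy, Nat.mul_div_cancel_left y (pow_pos hp0 f)]
      rw [hyq] at hpy
      have hDn : p^e ∣ x^2+c₁^2 := by
        rw [hy, hxfact y, he2f]
        exact Dvd.dvd.mul_right dvd_rfl _
      refine ⟨(hDnat e x).mpr hDn, ?_⟩
      rintro ⟨-, hB⟩
      have hBn := (hDnat (e+1) x).mp hB
      rw [hy, hxfact y, he2f] at hBn
      have h2 : p^(2*f) * p ∣ p^(2*f) * (y^2+m^2) := by rw [← pow_succ]; exact hBn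
      exact hpy ((Nat.mul_dvd_mul_iff_left (pow_pos hp0 (2*f))).mp h2)
  refine ⟨?_, ?_, ?_, ?_, ?_, ?_⟩
  -- Case 1 : 2f+1 ≤ e, p ≡ 1 mod 4
  · rintro ⟨hlt, h41⟩
    rcases Nat.eq_zero_or_pos f with hf0 | hf1
    · -- f = 0 : answer 2
      rw [if_pos hf0]
      subst hf0
      have hcm : c₁ = m := by simpa using hc₁
      have hpc : ¬ (p:ℤ) ∣ (c₁:ℤ) := by rw [hcm]; exact hmz
      rw [s_eq c₁ p e hp0]
      have hcong : (range (p^e)).filter (fun x : ℕ =>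
          (p:ℤ)^e ∣ (x:ℤ)^2+(c₁:ℤ)^2 ∧
          ¬(((p:ℤ) ∣ (x:ℤ)) ∧ (p:ℤ)^(e+1) ∣ (x:ℤ)^2+(c₁:ℤ)^2))
          = (range (p^e)).filter (fun x : ℕ => (p:ℤ)^e ∣ (x:ℤ)^2+(c₁:ℤ)^2) := by
        refine Finset.filter_congr fun x _ => ?_
        constructor
        · exact fun h => h.1
        · intro hD
          refine ⟨hD, ?_⟩
          rintro ⟨hA, -⟩
          have hpx : p ∣ x := Int.natCast_dvd_natCast.mp hA
          have hDn : p ∣ x^2 + c₁^2 :=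
            dvd_trans (dvd_pow_self p (by omega : e ≠ 0)) ((hDnat e x).mp hD)
          have hx2 : p ∣ x^2 := by rw [sq]; exact hpx.mul_right x
          have hcp : p ∣ c₁^2 := by
            have := Nat.dvd_sub hDn hx2
            simpa [Nat.add_sub_cancel_left] using this
          exact hm (by rw [← hcm]; exact hp.dvd_of_dvd_pow hcp)
      rw [hcong]
      have h8 := count_two p hp hodd h41 e e (by omega) le_rfl (c₁:ℤ) hpc
      simpa using h8
    · -- f ≥ 1 : answer 2(p-1)p^(f-1)
      rw [if_neg (by omega)]
      have hpZ : ((p:ℤ)) ≠ 0 := by exact_mod_cast hp0.ne'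
      have hcancel : ∀ (j : ℕ) (A : ℤ), ((p:ℤ)^(2*f) * (p:ℤ)^j ∣ (p:ℤ)^(2*f) * A) ↔ (p:ℤ)^j ∣ A :=
        fun j A => mul_dvd_mul_iff_left (pow_ne_zero _ hpZ)
      have hxfZ : ∀ y : ℕ, ((p^f*y : ℕ):ℤ)^2 + (c₁:ℤ)^2 = (p:ℤ)^(2*f) * ((y:ℤ)^2 + (m:ℤ)^2) := by
        intro y
        rw [hcsqZ]
        push_cast
        ring
      have hpq1 : ∀ x : ℕ, x < p^e →
          ((((p:ℤ)^e ∣ (x:ℤ)^2+(c₁:ℤ)^2) ∧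
            ¬(((p:ℤ) ∣ (x:ℤ)) ∧ (p:ℤ)^(e+1) ∣ (x:ℤ)^2+(c₁:ℤ)^2))
            ↔ (p^f ∣ x ∧ ((p:ℤ)^(e-2*f) ∣ ((x / p^f : ℕ):ℤ)^2 + (m:ℤ)^2 ∧
              ¬ (p:ℤ)^(e-2*f+1) ∣ ((x / p^f : ℕ):ℤ)^2 + (m:ℤ)^2))) := by
        intro x hxlt
        constructor
        · rintro ⟨hD, hnot⟩
          have hfx : p^f ∣ x := hfx_of x (by omega) hD
          obtain ⟨y, hy⟩ := hfx
          have hyq : x / p^f = y := by rw [hy, Nat.mul_div_cancel_left y (pow_pos hp0 f)]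
          rw [hyq]
          have hxZ : (x:ℤ)^2 + (c₁:ℤ)^2 = (p:ℤ)^(2*f) * ((y:ℤ)^2 + (m:ℤ)^2) := by
            rw [hy]; exact hxfZ y
          refine ⟨⟨y, hy⟩, ?_, ?_⟩
          · rw [hxZ, show e = 2*f + (e-2*f) by omega, pow_add] at hD
            exact (hcancel _ _).mp hD
          · intro hB
            apply hnot
            refine ⟨?_, ?_⟩
            · exact_mod_cast dvd_trans (dvd_pow_self p (by omega : f ≠ 0)) ⟨y, hy⟩
            · rw [hxZ, show e+1 = 2*f + (e-2*f+1) by omega, pow_add]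
              exact (hcancel _ _).mpr hB
        · rintro ⟨⟨y, hy⟩, hQ1, hQ2⟩
          have hyq : x / p^f = y := by rw [hy, Nat.mul_div_cancel_left y (pow_pos hp0 f)]
          rw [hyq] at hQ1 hQ2
          have hxZ : (x:ℤ)^2 + (c₁:ℤ)^2 = (p:ℤ)^(2*f) * ((y:ℤ)^2 + (m:ℤ)^2) := by
            rw [hy]; exact hxfZ y
          refine ⟨?_, ?_⟩
          · rw [hxZ, show e = 2*f + (e-2*f) by omega, pow_add]
            exact (hcancel _ _).mpr hQ1
          · rintro ⟨-, hB⟩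
            rw [hxZ, show e+1 = 2*f + (e-2*f+1) by omega, pow_add] at hB
            exact hQ2 ((hcancel _ _).mp hB)
      rw [s_eq c₁ p e hp0,
        card_subst p e f hp0 (by omega) _
          (fun y : ℕ => (p:ℤ)^(e-2*f) ∣ (y:ℤ)^2 + (m:ℤ)^2 ∧
            ¬ (p:ℤ)^(e-2*f+1) ∣ (y:ℤ)^2 + (m:ℤ)^2) hpq1]
      have hss : (range (p^(e-f))).filter (fun y : ℕ =>
            (p:ℤ)^(e-2*f+1) ∣ (y:ℤ)^2 + (m:ℤ)^2)
          ⊆ (range (p^(e-f))).filter (fun y : ℕ =>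
            (p:ℤ)^(e-2*f) ∣ (y:ℤ)^2 + (m:ℤ)^2) := by
        intro y hy
        rw [Finset.mem_filter] at hy ⊢
        exact ⟨hy.1, dvd_trans (pow_dvd_pow _ (by omega)) hy.2⟩
      have hsd : (range (p^(e-f))).filter (fun y : ℕ =>
            (p:ℤ)^(e-2*f) ∣ (y:ℤ)^2 + (m:ℤ)^2 ∧
            ¬ (p:ℤ)^(e-2*f+1) ∣ (y:ℤ)^2 + (m:ℤ)^2)
          = (range (p^(e-f))).filter (fun y : ℕ =>
            (p:ℤ)^(e-2*f) ∣ (y:ℤ)^2 + (m:ℤ)^2)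
          \ (range (p^(e-f))).filter (fun y : ℕ =>
            (p:ℤ)^(e-2*f+1) ∣ (y:ℤ)^2 + (m:ℤ)^2) := by
        ext y
        simp only [Finset.mem_filter, Finset.mem_sdiff]
        tauto
      rw [hsd, Finset.card_sdiff_of_subset hss]
      have hA := count_two p hp hodd h41 (e-2*f) (e-f) (by omega) (by omega) (m:ℤ) hmz
      have hB := count_two p hp hodd h41 (e-2*f+1) (e-f) (by omega) (by omega) (m:ℤ) hmz
      rw [show (e-f) - (e-2*f) = f by omega] at hA
      rw [show (e-f) - (e-2*f+1) = f-1 by omega] at hB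
      rw [hA, hB]
      have hpf : p^f = p * p^(f-1) := by
        conv_lhs => rw [show f = (f-1)+1 by omega]
        rw [pow_succ']
      have heq : 2 * (p-1) * p^(f-1) = 2*p^f - 2*(p^(f-1)) := by
        rw [show 2*(p-1) = 2*p-2 by omega, Nat.sub_mul, hpf, mul_assoc]
      rw [heq]
  -- Case 2 : 2f+1 ≤ e, p ≡ 3 mod 4
  · rintro ⟨hlt, h43⟩
    rw [s_eq c₁ p e hp0, Finset.card_eq_zero, Finset.filter_eq_empty_iff]
    rintro x hx ⟨hD, hnot⟩
    obtain ⟨y, hy⟩ := hfx_of x (by omega) hD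
    refine hns y ?_ h43
    have hDn := (hDnat e x).mp hD
    rw [hy, hxfact y] at hDn
    have h2 : p^(2*f) * p ∣ p^(2*f) * (y^2+m^2) := by
      rw [← pow_succ]
      exact dvd_trans (pow_dvd_pow p (by omega)) hDn
    exact (Nat.mul_dvd_mul_iff_left (pow_pos hp0 (2*f))).mp h2
  -- Case 3 : e = 2f, f ≥ 1, p ≡ 1 mod 4
  · rintro ⟨he2f, hf1, h41⟩
    rw [s_eq c₁ p e hp0,
      card_subst p e f hp0 (by omega) _ (fun y => ¬ p ∣ (y^2 + m^2)) (hpq2 he2f hf1),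
      show e - f = f by omega]
    have hcnt : ((range (p^f)).filter (fun y => p ∣ (y^2 + m^2))).card = 2 * p^(f-1) := by
      have h6 : ((range (p^f)).filter (fun y : ℕ => (p:ℤ)^1 ∣ (y:ℤ)^2 + (m:ℤ)^2)).card
          = 2 * p^(f-1) := by
        have h7 := count_two p hp hodd h41 1 f le_rfl hf1 (m:ℤ) hmz
        rwa [show f - 1 = f - 1 from rfl] at h7
      rw [← h6]
      refine congrArg _ (Finset.filter_congr fun y _ => ?_)
      rw [pow_one]
      constructor
      · intro h; exact_mod_cast h
      · intro h; exact_mod_cast h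
    have htot := Finset.card_filter_add_card_filter_not
      (s := range (p^f)) (p := fun y => p ∣ (y^2 + m^2))
    rw [card_range, hcnt] at htot
    have hpf : p^f = p * p^(f-1) := by
      conv_lhs => rw [show f = (f-1)+1 by omega]
      rw [pow_succ']
    have heq : (p-2) * p^(f-1) = p^f - 2*p^(f-1) := by
      rw [Nat.sub_mul, ← hpf]
    rw [heq]
    omega
  -- Case 4 : e = 2f, p ≡ 3 mod 4
  · rintro ⟨he2f, h43⟩
    have hf1 : 1 ≤ f := by omega
    rw [s_eq c₁ p e hp0,
      card_subst p e f hp0 (by omega) _ (fun y => ¬ p ∣ (y^2 + m^2)) ?_,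
      show e - f = f by omega]
    · have hempty : ((range (p^f)).filter (fun y => p ∣ (y^2 + m^2))) = ∅ := by
        rw [Finset.filter_eq_empty_iff]
        intro y hy hdvd
        exact hns y hdvd h43
      have htot := Finset.card_filter_add_card_filter_not
        (s := range (p^f)) (p := fun y => p ∣ (y^2 + m^2))
      rw [card_range, hempty] at htot
      simpa using htot
    · intro x hxlt
      have h5 := hpq2 he2f hf1 x hxlt
      convert h5 using 2
  -- Case 5
  -- Case 5 : e < 2f, e even
  · rintro ⟨hlt, hee⟩
    obtain ⟨g, hg⟩ := hee
    have hg1 : 1 ≤ g := by omega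
    have hpq : ∀ x : ℕ, x < p^e →
        ((((p:ℤ)^e ∣ (x:ℤ)^2+(c₁:ℤ)^2) ∧
          ¬(((p:ℤ) ∣ (x:ℤ)) ∧ (p:ℤ)^(e+1) ∣ (x:ℤ)^2+(c₁:ℤ)^2))
          ↔ (p^g ∣ x ∧ ¬ p ∣ (x / p^g))) := by
      intro x hxlt
      constructor
      · rintro ⟨hD, hnot⟩
        have hDn := (hDnat e x).mp hD
        have hx2 : p^e ∣ x^2 := hsub e x (by omega) hDn
        have hgx : p^g ∣ x := by
          have h3 := pow_half_dvd hp e x hx2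
          rwa [show (e+1)/2 = g by omega] at h3
        refine ⟨hgx, fun hpy => hnot ⟨?_, ?_⟩⟩
        · exact_mod_cast dvd_trans (dvd_pow_self p (by omega : g ≠ 0)) hgx
        · rw [hDnat]
          refine Nat.dvd_add ?_ (hdvd_c (e+1) (by omega))
          have hgx1 : p^(g+1) ∣ x := by
            obtain ⟨y, hy⟩ := hgx
            have hpy' : p ∣ y := by
              rwa [hy, Nat.mul_div_cancel_left y (pow_pos hp0 g)] at hpy
            obtain ⟨z, hz⟩ := hpy'
            exact ⟨z, by rw [hy, hz, pow_succ]; ring⟩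
          have h1 : p^(e+1) ∣ (p^(g+1))^2 := by
            rw [← pow_mul]; exact pow_dvd_pow p (by omega)
          exact dvd_trans h1 (pow_dvd_pow_of_dvd hgx1 2)
      · rintro ⟨hgx, hpy⟩
        obtain ⟨y, hy⟩ := hgx
        have hyq : x / p^g = y := by rw [hy, Nat.mul_div_cancel_left y (pow_pos hp0 g)]
        rw [hyq] at hpy
        have hx2 : p^e ∣ x^2 := by
          rw [hy, mul_pow, ← pow_mul]
          exact Dvd.dvd.mul_right (pow_dvd_pow p (by omega)) _
        refine ⟨(hDnat e x).mpr (Nat.dvd_add hx2 (hdvd_c e (by omega))), ?_⟩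
        rintro ⟨-, hB⟩
        have hBn := (hDnat (e+1) x).mp hB
        have hBx : p^(e+1) ∣ x^2 := hsub (e+1) x (by omega) hBn
        rw [hy, mul_pow, ← pow_mul] at hBx
        have hpy2 : p ∣ y^2 := by
          have h2 : p^(g*2) * p ∣ p^(g*2) * y^2 := by
            rw [← pow_succ]
            exact dvd_trans (pow_dvd_pow p (by omega)) hBx
          exact (Nat.mul_dvd_mul_iff_left (pow_pos hp0 (g*2))).mp h2
        exact hpy (hp.dvd_of_dvd_pow hpy2)
    rw [s_eq c₁ p e hp0,
      card_subst p e g hp0 (by omega) _ (fun y => ¬ p ∣ y) hpq,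
      show e - g = g by omega]
    have htot := Finset.card_filter_add_card_filter_not
      (s := range (p^g)) (p := fun y => p ∣ y)
    have hone : ((range (p^g)).filter (fun y => p ∣ y)).card = p^(g-1) := by
      have h4 := count_dvd p hp0 1 g (by omega)
      simpa using h4
    rw [card_range] at htot
    have hpg : p^g = p * p^(g-1) := by
      conv_lhs => rw [show g = (g-1)+1 by omega]
      rw [pow_succ']
    have heq : (p-1) * p^(g-1) = p^g - p^(g-1) := by
      rw [Nat.sub_mul, one_mul, ← hpg]
    rw [show e/2 - 1 = g - 1 by omega, heq]
    have hg2 : g - 1 ≤ g := by omega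
    have hmono : p^(g-1) ≤ p^g := Nat.pow_le_pow_right hp0 hg2
    omega
  -- Case 6 : e < 2f, e odd
  · rintro ⟨hlt, hoe⟩
    obtain ⟨t, ht⟩ := hoe
    rw [s_eq c₁ p e hp0, Finset.card_eq_zero, Finset.filter_eq_empty_iff]
    rintro x hx ⟨hD, hnot⟩
    apply hnot
    have hDn : p^e ∣ x^2+c₁^2 := (hDnat e x).mp hD
    have hx2 : p^e ∣ x^2 := hsub e x (by omega) hDn
    have hgx : p^((e+1)/2) ∣ x := pow_half_dvd hp e x hx2
    constructor
    · exact_mod_cast dvd_trans (dvd_pow_self p (by omega : (e+1)/2 ≠ 0)) hgx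
    · rw [hDnat (e+1) x]
      refine Nat.dvd_add ?_ (hdvd_c (e+1) (by omega))
      have h1 : p^(e+1) ∣ (p^((e+1)/2))^2 := by
        rw [← pow_mul]; exact pow_dvd_pow p (by omega)
      exact dvd_trans h1 (pow_dvd_pow_of_dvd hgx 2)
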